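/- For the five-dimensional Lie algebra with nonzero structure constants determined by $[e_1,e_4]=-e_1$, $[e_1,e_5]=e_2$, $[e_2,e_3]=e_1$, $[e_2,e_4]=e_2$, $[e_3,e_4]=-2e_3$, $[e_3,e_5]=e_4$, $[e_4,e_5]=-2e_5$, the polynomial $K(f) = f_5 f_1^2 + f_1 f_2 f_4 - f_2^2 f_3$ on the dual space is a Casimir function: it Poisson-commutes with every coordinate function $f_A$ with respect to the Poisson–Lie bracket $\{\phi,\psi\}(f)=C^C_{AB} f_C\, \partial_{f_A}\phi\, \partial_{f_B}\psi$. -/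

import Mathlib

open Finset

/-- The bracket of basis elements `e_A, e_B` of the five-dimensional Lie algebra,
expressed as a vector of coordinates w.r.t. the basis `e_1,…,e_5`
(indices shifted to `0,…,4`): the nonzero brackets are
`[e₁,e₄]=-e₁, [e₁,e₅]=e₂, [e₂,e₃]=e₁, [e₂,e₄]=e₂, [e₃,e₄]=-2e₃,
[e₃,e₅]=e₄, [e₄,e₅]=-2e₅`. -/
def br5 : Fin 5 → Fin 5 → Fin 5 → ℝ :=
  ![![0, 0, 0, ![-1,0,0,0,0], ![0,1,0,0,0]],
    ![0, 0, ![1,0,0,0,0], ![0,1,0,0,0], 0],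
    ![0, ![-1,0,0,0,0], 0, ![0,0,-2,0,0], ![0,0,0,1,0]],
    ![![1,0,0,0,0], ![0,-1,0,0,0], ![0,0,2,0,0], 0, ![0,0,0,0,-2]],
    ![![0,-1,0,0,0], 0, ![0,0,0,-1,0], ![0,0,0,0,2], 0]]

/-- The structure constants `C_{AB}^D = [e_A,e_B]^D` of the five-dimensional
Lie algebra. -/
def C5 (A B D : Fin 5) : ℝ := br5 A B D

/-- The polynomial `K(f) = f₅ f₁² + f₁ f₂ f₄ - f₂² f₃` on the dual space. -/
def K5 (f : Fin 5 → ℝ) : ℝ := f 4 * (f 0)^2 + f 0 * f 1 * f 3 - (f 1)^2 * f 2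


lemma K5_fderiv (f : Fin 5 → ℝ) (v : Fin 5 → ℝ) :
    fderiv ℝ K5 f v = v 4 * (f 0)^2 + f 4 * (v 0 * f 0 + f 0 * v 0)
      + ((v 0 * f 1 + f 0 * v 1) * f 3 + f 0 * f 1 * v 3)
      - ((v 1 * f 1 + f 1 * v 1) * f 2 + f 1 * f 1 * v 2) := by
  have h : ∀ i : Fin 5, HasFDerivAt (fun g : Fin 5 → ℝ => g i)
      ((ContinuousLinearMap.proj i : (Fin 5 → ℝ) →L[ℝ] ℝ)) f := fun i => hasFDerivAt_apply i f
  have hK : K5 = fun g : Fin 5 → ℝ =>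
      g 4 * (g 0 * g 0) + g 0 * g 1 * g 3 - (g 1 * g 1) * g 2 := by
    funext g; simp [K5]; ring
  have H := (((h 4).mul ((h 0).mul (h 0))).add (((h 0).mul (h 1)).mul (h 3))).sub
      (((h 1).mul (h 1)).mul (h 2))
  rw [hK, HasFDerivAt.fderiv (f := fun g : Fin 5 → ℝ => g 4 * (g 0 * g 0) + g 0 * g 1 * g 3 - (g 1 * g 1) * g 2) H]
  simp [ContinuousLinearMap.proj]
  ring

/-- `K(f) = f₅ f₁² + f₁ f₂ f₄ - f₂² f₃` is a Casimir function of the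
Poisson–Lie bracket `{φ,ψ}(f) = C_{AB}^D f_D ∂φ/∂f_A ∂ψ/∂f_B` on the dual of the
five-dimensional Lie algebra with nonzero brackets `[e₁,e₄]=-e₁, [e₁,e₅]=e₂,
[e₂,e₃]=e₁, [e₂,e₄]=e₂, [e₃,e₄]=-2e₃, [e₃,e₅]=e₄, [e₄,e₅]=-2e₅`:
it Poisson-commutes with every coordinate function, i.e.
`C_{AB}^D f_D ∂K/∂f_B = 0` for each fixed `A`. -/
theorem K5_casimir (f : Fin 5 → ℝ) (A : Fin 5) :
    ∑ B, (∑ D, C5 A B D * f D) * fderiv ℝ K5 f (Pi.single B 1) = 0 := by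
  simp only [K5_fderiv, Fin.sum_univ_five]
  fin_cases A <;>
    simp [C5, br5, Pi.single, Function.update, Matrix.vecHead, Matrix.vecTail] <;> ring
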